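/- Let f be a generator of P_{nd}, written f = ∏_{s=1}^{r} x_{i_s1}x_{i_s2}···x_{i_sd_s} with i₁ < i₂ < ··· < i_r, each d_s ≥ 1 and d₁+···+d_r = d. Let m be a monomial of degree d in S̃ such that for every s with 1 ≤ s ≤ r, the monomial x_{i_s(d_s+1)}x_{i_s(d_s+2)}···x_{i_sd}·m lies in P_{nd} (i.e., is divisible by a generator of P_{nd}). Then m itself lies in P_{nd}. Consequently, a proper first order deformation of a generator of P_{nd} cannot vanish when pushed toward every vertex, so it can be pushed to at least one vertex. -/

import Mathlib

/-!
Statement 13: Let `f = ∏_s x_{i_s1}⋯x_{i_sd_s}` be a generator of the standard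
polarization `P_{nd}` (given by exponents `e : Fin n → ℕ` with `∑ e i = d`, the support of
`e` being `{i₁ < ⋯ < i_r}` with `d_s = e i_s`), and let `m` be a monomial of degree `d`
such that for every `s`, the monomial `x_{i_s(d_s+1)}⋯x_{i_sd}·m` lies in `P_{nd}`.
Then `m ∈ P_{nd}`.  (Hence a proper first order deformation of a generator of `P_{nd}`
cannot vanish when pushed toward every vertex.)
-/

set_option synthInstance.maxHeartbeats 800000
set_option maxHeartbeats 1600000

open MvPolynomial

noncomputable section

/-- The standard polarization `P_{nd}` of `m^d`. -/
def StdIdeal (k : Type) [Field k] (n d : ℕ) : Ideal (MvPolynomial (Fin n × Fin d) k) :=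
  Ideal.span {f | ∃ e : Fin n → ℕ, (∑ i, e i) = d ∧
    f = ∏ p : Fin n × Fin d, if (p.2 : ℕ) < e p.1 then X p else 1}

/-- `f` is a monomial (with coefficient `1`). -/
def IsMonomial (k : Type) [Field k] (σ : Type) (f : MvPolynomial σ k) : Prop :=
  ∃ u : σ →₀ ℕ, f = monomial u 1

/-- The exponent vector of the polarization generator attached to `e`. -/
def indFinsupp {n d : ℕ} (e : Fin n → ℕ) : (Fin n × Fin d) →₀ ℕ :=
  Finsupp.equivFunOnFinite.symm fun p => if (p.2 : ℕ) < e p.1 then 1 else 0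

@[simp] lemma indFinsupp_apply {n d : ℕ} (e : Fin n → ℕ) (p : Fin n × Fin d) :
    indFinsupp e p = if (p.2 : ℕ) < e p.1 then 1 else 0 := rfl

/-- The exponent vector of `x_{i,e_i+1} ⋯ x_{i,d}`. -/
def vInd {n d : ℕ} (i : Fin n) (e : Fin n → ℕ) : (Fin n × Fin d) →₀ ℕ :=
  Finsupp.equivFunOnFinite.symm fun p => if p.1 = i ∧ e i ≤ (p.2 : ℕ) then 1 else 0

@[simp] lemma vInd_apply {n d : ℕ} (i : Fin n) (e : Fin n → ℕ) (p : Fin n × Fin d) :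
    vInd i e p = if p.1 = i ∧ e i ≤ (p.2 : ℕ) then 1 else 0 := rfl

lemma monomial_eq_prod_pow {k : Type} [Field k] {n d : ℕ} (v : (Fin n × Fin d) →₀ ℕ) :
    (monomial v (1 : k)) = ∏ p : Fin n × Fin d, X p ^ v p := by
  rw [monomial_eq, C_1, one_mul, Finsupp.prod_fintype]
  intro p
  exact pow_zero _

lemma prod_eq_monomial {k : Type} [Field k] {n d : ℕ} (e : Fin n → ℕ) :
    (∏ p : Fin n × Fin d, if (p.2 : ℕ) < e p.1 then X p else (1 : MvPolynomial (Fin n × Fin d) k))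
      = monomial (indFinsupp e) 1 := by
  rw [monomial_eq_prod_pow]
  refine Finset.prod_congr rfl fun p _ => ?_
  rw [indFinsupp_apply]
  split <;> simp

lemma vprod_eq_monomial {k : Type} [Field k] {n d : ℕ} (i : Fin n) (e : Fin n → ℕ) :
    (∏ j : Fin d, if e i ≤ (j : ℕ) then X (i, j) else (1 : MvPolynomial (Fin n × Fin d) k))
      = monomial (vInd i e) 1 := by
  rw [monomial_eq_prod_pow, Fintype.prod_prod_type]
  rw [Finset.prod_eq_single i]
  · refine Finset.prod_congr rfl fun j _ => ?_
    rw [vInd_apply]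
    by_cases hj : e i ≤ (j : ℕ) <;> simp [hj]
  · intro a _ ha
    refine Finset.prod_eq_one fun j _ => ?_
    simp [vInd_apply, ha]
  · simp

lemma stdIdeal_eq (k : Type) [Field k] (n d : ℕ) :
    StdIdeal k n d = Ideal.span ((fun v => monomial v (1 : k)) ''
      {v : (Fin n × Fin d) →₀ ℕ | ∃ e : Fin n → ℕ, (∑ i, e i) = d ∧ v = indFinsupp e}) := by
  unfold StdIdeal
  congr 1
  ext f
  constructor
  · rintro ⟨e, he, rfl⟩
    exact ⟨indFinsupp e, ⟨e, he, rfl⟩, (prod_eq_monomial e).symm⟩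
  · rintro ⟨v, ⟨e, he, rfl⟩, rfl⟩
    exact ⟨e, he, (prod_eq_monomial e).symm⟩

lemma exists_le_sum_eq {ι : Type} (s : Finset ι) :
    ∀ (d : ℕ) (c : ι → ℕ), d ≤ ∑ i ∈ s, c i →
      ∃ f : ι → ℕ, (∀ i, f i ≤ c i) ∧ ∑ i ∈ s, f i = d := by
  classical
  induction s using Finset.induction_on with
  | empty =>
    intro d c hd
    simp only [Finset.sum_empty, Nat.le_zero] at hd
    exact ⟨fun _ => 0, fun _ => Nat.zero_le _, by simp [hd]⟩
  | insert _ _ ha ih =>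
    rename_i a s
    intro d c hd
    rw [Finset.sum_insert ha] at hd
    obtain ⟨f, hf, hfs⟩ := ih (d - min d (c a)) c (by omega)
    refine ⟨Function.update f a (min d (c a)), ?_, ?_⟩
    · intro i
      by_cases hi : i = a
      · subst hi; rw [Function.update_self]; exact min_le_right _ _
      · simpa [Function.update_of_ne hi] using hf i
    · rw [Finset.sum_insert ha, Function.update_self]
      have hsc : ∑ x ∈ s, Function.update f a (min d (c a)) x = ∑ x ∈ s, f x :=
        Finset.sum_congr rfl fun i hi => Function.update_of_ne (by rintro rfl; exact ha hi) _ _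
      rw [hsc]
      omega

theorem statement13 (k : Type) [Field k] (n d : ℕ)
    (e : Fin n → ℕ) (he : (∑ i, e i) = d)
    (m : MvPolynomial (Fin n × Fin d) k)
    (hm : IsMonomial k (Fin n × Fin d) m) (hmd : m.totalDegree = d)
    (h : ∀ i : Fin n, 0 < e i →
      (∏ j : Fin d, if e i ≤ (j : ℕ) then X (i, j) else 1) * m ∈ StdIdeal k n d) :
    m ∈ StdIdeal k n d := by
  classical
  obtain ⟨u, rfl⟩ := hm
  -- c i = longest prefix of variables x_{i,0..c i - 1} dividing m
  set c : Fin n → ℕ := fun i =>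
    Nat.findGreatest (fun t => ∀ j : Fin d, (j : ℕ) < t → 1 ≤ u (i, j)) d with hc
  have hA : ∀ i : Fin n, ∀ j : Fin d, (j : ℕ) < c i → 1 ≤ u (i, j) := by
    intro i
    exact Nat.findGreatest_spec (P := fun t => ∀ j : Fin d, (j : ℕ) < t → 1 ≤ u (i, j))
      (Nat.zero_le d) (fun j hj => absurd hj (Nat.not_lt_zero _))
  have hB : ∀ (i : Fin n) (t : ℕ), t ≤ d → (∀ j : Fin d, (j : ℕ) < t → 1 ≤ u (i, j)) →
      t ≤ c i := fun i t ht hP => Nat.le_findGreatest ht hP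
  -- extract generator info from each hypothesis instance
  have key : ∀ s : Fin n, 0 < e s →
      ∃ e' : Fin n → ℕ, (∑ i, e' i) = d ∧ indFinsupp e' ≤ vInd s e + u := by
    intro s hs
    have hmem := h s hs
    rw [stdIdeal_eq, vprod_eq_monomial, monomial_mul, one_mul,
      mem_ideal_span_monomial_image] at hmem
    have := hmem (vInd s e + u) (by simp [support_monomial])
    obtain ⟨si, ⟨e', he', rfl⟩, hle⟩ := this
    exact ⟨e', he', hle⟩
  have hed : ∀ (e' : Fin n → ℕ), (∑ i, e' i) = d → ∀ i, e' i ≤ d := by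
    intro e' he' i
    rw [← he']
    exact Finset.single_le_sum (fun _ _ => Nat.zero_le _) (Finset.mem_univ i)
  -- main claim: d ≤ ∑ c
  have hsum : d ≤ ∑ i, c i := by
    by_contra hlt
    push_neg at hlt
    have hecs : ∀ s : Fin n, e s ≤ c s := by
      intro s
      rcases Nat.eq_zero_or_pos (e s) with h0 | hs
      · simp [h0]
      obtain ⟨e', he', hle⟩ := key s hs
      have hle' : ∀ p : Fin n × Fin d, indFinsupp e' p ≤ vInd s e p + u p := fun p => by
        simpa using Finsupp.le_def.mp hle p
      -- for i ≠ s, e' i ≤ c i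
      have h1 : ∀ i : Fin n, i ≠ s → e' i ≤ c i := by
        intro i his
        refine hB i (e' i) (hed e' he' i) fun j hj => ?_
        have := hle' (i, j)
        simp only [indFinsupp_apply, vInd_apply] at this
        simpa [hj, his] using this
      -- c s ≥ min (e' s) (e s)
      have h2 : min (e' s) (e s) ≤ c s := by
        refine hB s _ (le_trans (min_le_left _ _) (hed e' he' s)) fun j hj => ?_
        have hj1 : (j : ℕ) < e' s := lt_of_lt_of_le hj (min_le_left _ _)
        have hj2 : (j : ℕ) < e s := lt_of_lt_of_le hj (min_le_right _ _)
        have := hle' (s, j)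
        simp only [indFinsupp_apply, vInd_apply] at this
        simpa [hj1, Nat.not_le.mpr hj2] using this
      -- c s < e' s
      have h3 : ∑ i ∈ Finset.univ.erase s, e' i ≤ ∑ i ∈ Finset.univ.erase s, c i :=
        Finset.sum_le_sum fun i hi => h1 i (Finset.ne_of_mem_erase hi)
      have h4 : e' s + ∑ i ∈ Finset.univ.erase s, e' i = d := by
        rw [Finset.add_sum_erase _ _ (Finset.mem_univ s)]; exact he'
      have h5 : c s + ∑ i ∈ Finset.univ.erase s, c i = ∑ i, c i := by
        rw [Finset.add_sum_erase _ _ (Finset.mem_univ s)]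
      have h6 : c s < e' s := by omega
      omega
    have : (∑ i, e i) ≤ ∑ i, c i := Finset.sum_le_sum fun i _ => hecs i
    omega
  -- choose a generator exponent vector below c
  obtain ⟨e'', he''c, he''s⟩ := exists_le_sum_eq Finset.univ d c hsum
  rw [stdIdeal_eq, mem_ideal_span_monomial_image]
  intro xi hxi
  rw [support_monomial, if_neg one_ne_zero, Finset.mem_singleton] at hxi
  subst hxi
  refine ⟨indFinsupp e'', ⟨e'', he''s, rfl⟩, Finsupp.le_def.mpr fun p => ?_⟩
  rw [indFinsupp_apply]
  split
  · next hp =>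
    exact hA p.1 p.2 (lt_of_lt_of_le hp (he''c p.1))
  · exact Nat.zero_le _

end
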